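/- Let m, n ≥ 1 be integers. For A ∈ Matrix (Fin m) (Fin n) ℂ let S(A) = {(X,Y) ∈ 𝔰𝔬(m) × 𝔲(n) : (X mapped entrywise into ℂ)·A = A·Y}, regarded as a real vector space. Then the minimum over all A of dim_ℝ S(A) equals (m−2n)(m−2n−1)/2 if m > 2n+1, equals (n−m)² if n > m, and equals 0 otherwise. (This is the infinitesimal version of: the identity component of a principal isotropy group of the action of SO(m)×U(n) on ℝᵐ ⊗_ℝ ℂⁿ, given by (g,u)·A = g A u*, is SO(m−2n) if m > 2n+1, is U(n−m) if n > m, and is trivial otherwise.) -/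

import Mathlib

open Matrix

/-- `S(A) = {(X,Y) ∈ 𝔰𝔬(m) × 𝔲(n) : X·A = A·Y}`, where the real skew-symmetric matrix `X`
is mapped entrywise into `ℂ`. -/
def stabSet3 {m n : ℕ} (A : Matrix (Fin m) (Fin n) ℂ) :
    Set (Matrix (Fin m) (Fin m) ℝ × Matrix (Fin n) (Fin n) ℂ) :=
  {p | p.1ᵀ = -p.1 ∧ p.2ᴴ = -p.2 ∧ p.1.map (algebraMap ℝ ℂ) * A = A * p.2}

namespace Stab3

abbrev PLT (d : ℕ) := {ij : Fin d × Fin d // ij.1 < ij.2}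

noncomputable def soMk (d : ℕ) : (PLT d → ℝ) →ₗ[ℝ] Matrix (Fin d) (Fin d) ℝ where
  toFun f := Matrix.of fun i j =>
    if h : i < j then f ⟨(i, j), h⟩ else if h : j < i then -f ⟨(j, i), h⟩ else 0
  map_add' f g := by
    ext i j
    simp only [Matrix.of_apply, Matrix.add_apply, Pi.add_apply]
    split_ifs <;> ring
  map_smul' c f := by
    ext i j
    simp only [Matrix.of_apply, Matrix.smul_apply, RingHom.id_apply, smul_eq_mul, Pi.smul_apply]
    split_ifs <;> ring

lemma soMk_transpose {d : ℕ} (f : PLT d → ℝ) : (soMk d f)ᵀ = -soMk d f := by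
  ext i j
  simp only [soMk, LinearMap.coe_mk, AddHom.coe_mk, Matrix.transpose_apply, Matrix.neg_apply,
    Matrix.of_apply]
  rcases lt_trichotomy i j with h | h | h
  · rw [dif_neg (asymm h), dif_pos h, dif_pos h]
  · subst h; simp
  · rw [dif_pos h, dif_neg (asymm h), dif_pos h]; ring

lemma soMk_apply_lt {d : ℕ} (f : PLT d → ℝ) {i j : Fin d} (h : i < j) :
    soMk d f i j = f ⟨(i, j), h⟩ := by
  simp only [soMk, LinearMap.coe_mk, AddHom.coe_mk, Matrix.of_apply, dif_pos h]

lemma soMk_inj {d : ℕ} : Function.Injective (soMk d) := by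
  intro f g h
  funext ⟨⟨i, j⟩, hij⟩
  have := congrFun (congrFun h i) j
  rwa [soMk_apply_lt f hij, soMk_apply_lt g hij] at this

noncomputable def uMk (d : ℕ) : (Fin d × Fin d → ℝ) →ₗ[ℝ] Matrix (Fin d) (Fin d) ℂ where
  toFun f := Matrix.of fun i j =>
    if i < j then (f (i, j) : ℂ) + f (j, i) * Complex.I
    else if j < i then (-f (j, i) : ℝ) + f (i, j) * Complex.I
    else (f (i, i) : ℝ) * Complex.I
  map_add' f g := by
    ext i j
    simp only [Matrix.of_apply, Matrix.add_apply, Pi.add_apply]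
    split_ifs <;> push_cast <;> ring
  map_smul' c f := by
    ext i j
    simp only [Matrix.of_apply, Matrix.smul_apply, RingHom.id_apply, Pi.smul_apply,
      smul_eq_mul, Complex.real_smul]
    split_ifs <;> push_cast <;> ring

lemma uMk_conjTranspose {d : ℕ} (f : Fin d × Fin d → ℝ) : (uMk d f)ᴴ = -uMk d f := by
  ext i j
  simp only [uMk, LinearMap.coe_mk, AddHom.coe_mk, Matrix.conjTranspose_apply, Matrix.neg_apply,
    Matrix.of_apply]
  rcases lt_trichotomy i j with h | h | h
  · rw [if_neg (asymm h), if_pos h, if_pos h]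
    apply Complex.ext <;> simp
  · subst h; simp [lt_irrefl]
  · rw [if_pos h, if_neg (asymm h), if_pos h]
    apply Complex.ext <;> simp

lemma uMk_re_lt {d : ℕ} (f : Fin d × Fin d → ℝ) {i j : Fin d} (h : i < j) :
    (uMk d f i j).re = f (i, j) := by
  simp only [uMk, LinearMap.coe_mk, AddHom.coe_mk, Matrix.of_apply, if_pos h]
  simp

lemma uMk_im_lt {d : ℕ} (f : Fin d × Fin d → ℝ) {i j : Fin d} (h : i < j) :
    (uMk d f i j).im = f (j, i) := by
  simp only [uMk, LinearMap.coe_mk, AddHom.coe_mk, Matrix.of_apply, if_pos h]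
  simp

lemma uMk_im_diag {d : ℕ} (f : Fin d × Fin d → ℝ) (i : Fin d) :
    (uMk d f i i).im = f (i, i) := by
  simp only [uMk, LinearMap.coe_mk, AddHom.coe_mk, Matrix.of_apply, if_neg (lt_irrefl i)]
  simp

lemma uMk_inj {d : ℕ} : Function.Injective (uMk d) := by
  intro f g h
  funext ⟨i, j⟩
  rcases lt_trichotomy i j with hij | hij | hij
  · have := congrArg Complex.re (congrFun (congrFun h i) j)
    rwa [uMk_re_lt f hij, uMk_re_lt g hij] at this
  · subst hij
    have := congrArg Complex.im (congrFun (congrFun h i) i)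
    rwa [uMk_im_diag f i, uMk_im_diag g i] at this
  · have := congrArg Complex.im (congrFun (congrFun h j) i)
    rwa [uMk_im_lt f hij, uMk_im_lt g hij] at this

lemma skew_eq_zero {d : ℕ} {M : Matrix (Fin d) (Fin d) ℝ} (hM : Mᵀ = -M)
    (h : ∀ i j : Fin d, i < j → M i j = 0) : M = 0 := by
  ext i j
  rcases lt_trichotomy i j with hij | hij | hij
  · simp [h i j hij]
  · subst hij
    have := congrFun (congrFun hM i) i
    simp only [Matrix.transpose_apply, Matrix.neg_apply] at this
    simpa [Matrix.zero_apply] using by linarith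
  · have := congrFun (congrFun hM j) i
    simp only [Matrix.transpose_apply, Matrix.neg_apply] at this
    simp [this, h j i hij]

lemma skewHerm_eq_zero {d : ℕ} {M : Matrix (Fin d) (Fin d) ℂ} (hM : Mᴴ = -M)
    (h : ∀ i j : Fin d, i ≤ j → M i j = 0) : M = 0 := by
  ext i j
  rcases le_or_gt i j with hij | hij
  · simp [h i j hij]
  · have := congrFun (congrFun hM j) i
    simp only [Matrix.conjTranspose_apply, Matrix.neg_apply] at this
    rw [h j i hij.le, neg_zero] at this
    simpa using star_eq_zero.mp this

def pltEquiv (d : ℕ) : PLT d ≃ Σ j : Fin d, Fin j.val where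
  toFun x := ⟨x.1.2, ⟨x.1.1, x.2⟩⟩
  invFun s := ⟨(⟨s.2.1, s.2.2.trans s.1.2⟩, s.1), s.2.2⟩
  left_inv := by rintro ⟨⟨i, j⟩, h⟩; rfl
  right_inv := by rintro ⟨j, i⟩; rfl

lemma card_PLT (d : ℕ) : Fintype.card (PLT d) = d * (d - 1) / 2 := by
  rw [Fintype.card_congr (pltEquiv d), Fintype.card_sigma]
  simp only [Fintype.card_fin]
  rw [Fin.sum_univ_eq_sum_range (fun j => j) d, Finset.sum_range_id]


variable {m n : ℕ}

lemma map_smul' (c : ℝ) (X : Matrix (Fin m) (Fin m) ℝ) :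
    (c • X).map (algebraMap ℝ ℂ) = c • X.map (algebraMap ℝ ℂ) := by
  ext i j
  simp [Matrix.map_apply, Matrix.smul_apply, smul_eq_mul]

noncomputable def stabMod (A : Matrix (Fin m) (Fin n) ℂ) :
    Submodule ℝ (Matrix (Fin m) (Fin m) ℝ × Matrix (Fin n) (Fin n) ℂ) where
  carrier := stabSet3 A
  zero_mem' := by
    refine ⟨by simp, by simp, ?_⟩
    show (Matrix.map 0 (algebraMap ℝ ℂ)) * A = A * 0
    ext i j
    simp [Matrix.map_apply, Matrix.mul_apply]
  add_mem' := by
    rintro ⟨X, Y⟩ ⟨X', Y'⟩ ⟨h1, h2, h3⟩ ⟨h1', h2', h3'⟩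
    refine ⟨?_, ?_, ?_⟩
    · show (X + X')ᵀ = -(X + X')
      rw [Matrix.transpose_add, h1, h1']; abel
    · show (Y + Y')ᴴ = -(Y + Y')
      rw [Matrix.conjTranspose_add, h2, h2']; abel
    · show (X + X').map (algebraMap ℝ ℂ) * A = A * (Y + Y')
      rw [Matrix.map_add _ (map_add (algebraMap ℝ ℂ)), Matrix.add_mul, Matrix.mul_add, h3, h3']
  smul_mem' := by
    rintro c ⟨X, Y⟩ ⟨h1, h2, h3⟩
    refine ⟨?_, ?_, ?_⟩
    · show (c • X)ᵀ = -(c • X)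
      rw [Matrix.transpose_smul, h1, smul_neg]
    · show (c • Y)ᴴ = -(c • Y)
      rw [Matrix.conjTranspose_smul, h2, star_trivial, smul_neg]
    · show (c • X).map (algebraMap ℝ ℂ) * A = A * (c • Y)
      rw [map_smul', Matrix.smul_mul, Matrix.mul_smul, h3]

lemma span_stabSet3 (A : Matrix (Fin m) (Fin n) ℂ) :
    Submodule.span ℝ (stabSet3 A) = stabMod A :=
  Submodule.span_eq (stabMod A)

/-- the 𝔰𝔬 lower bound -/
lemma lower_so (A : Matrix (Fin m) (Fin n) ℂ) :
    (m - 2 * n) * (m - 2 * n - 1) / 2 ≤ Module.finrank ℝ ↥(stabMod A) := by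
  classical
  set g : Fin n ⊕ Fin n → EuclideanSpace ℝ (Fin m) :=
    Sum.elim (fun j => (WithLp.equiv 2 (Fin m → ℝ)).symm (fun i => (A i j).re))
      (fun j => (WithLp.equiv 2 (Fin m → ℝ)).symm (fun i => (A i j).im)) with hg
  set W : Submodule ℝ (EuclideanSpace ℝ (Fin m)) := Submodule.span ℝ (Set.range g) with hWdef
  have hW : Module.finrank ℝ W ≤ 2 * n := by
    refine (finrank_range_le_card g).trans ?_
    simp [two_mul]
  set d := Module.finrank ℝ (Wᗮ) with hd
  have hdm : m - 2 * n ≤ d := by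
    have h1 := Submodule.finrank_add_finrank_orthogonal (K := W)
    rw [finrank_euclideanSpace_fin] at h1
    omega
  set b := stdOrthonormalBasis ℝ (Wᗮ : Submodule ℝ (EuclideanSpace ℝ (Fin m))) with hb
  set B : Matrix (Fin m) (Fin d) ℝ := Matrix.of fun i l => ((b l : EuclideanSpace ℝ (Fin m)) i)
    with hB
  have hBtB : Bᵀ * B = 1 := by
    ext k l
    rw [Matrix.mul_apply]
    have horth := b.orthonormal
    rw [orthonormal_iff_ite] at horth
    have h2 : (inner ℝ ((b k : EuclideanSpace ℝ (Fin m))) ((b l : EuclideanSpace ℝ (Fin m))) : ℝ)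
        = if k = l then 1 else 0 := by
      rw [← Submodule.coe_inner]; exact horth k l
    rw [PiLp.inner_apply] at h2
    simp only [RCLike.inner_apply, conj_trivial] at h2
    rw [Matrix.one_apply]
    simp only [hB, Matrix.transpose_apply, Matrix.of_apply]
    rw [← h2]
    exact Finset.sum_congr rfl fun x _ => mul_comm _ _
  have hBA : ∀ (l : Fin d) (j : Fin n), ∑ i, (B i l : ℂ) * A i j = 0 := by
    intro l j
    have hmem := (b l).2
    rw [Submodule.mem_orthogonal] at hmem
    have hre : ∑ i, B i l * (A i j).re = 0 := by
      have h0 := hmem (g (Sum.inl j)) (Submodule.subset_span (Set.mem_range_self _))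
      rw [PiLp.inner_apply] at h0
      simp only [RCLike.inner_apply, conj_trivial] at h0
      rw [← h0]
      refine Finset.sum_congr rfl fun i _ => ?_
      rfl
    have him : ∑ i, B i l * (A i j).im = 0 := by
      have h0 := hmem (g (Sum.inr j)) (Submodule.subset_span (Set.mem_range_self _))
      rw [PiLp.inner_apply] at h0
      simp only [RCLike.inner_apply, conj_trivial] at h0
      rw [← h0]
      refine Finset.sum_congr rfl fun i _ => ?_
      rfl
    calc ∑ i, (B i l : ℂ) * A i j
        = ∑ i, (((B i l * (A i j).re : ℝ) : ℂ) + ((B i l * (A i j).im : ℝ) : ℂ) * Complex.I) := by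
          refine Finset.sum_congr rfl fun i _ => ?_
          conv_lhs => rw [← Complex.re_add_im (A i j)]
          push_cast
          ring
      _ = ((∑ i, B i l * (A i j).re : ℝ) : ℂ) + ((∑ i, B i l * (A i j).im : ℝ) : ℂ) * Complex.I := by
          rw [Finset.sum_add_distrib, ← Finset.sum_mul]
          push_cast
          ring
      _ = 0 := by rw [hre, him]; simp
  have hBmapA : Bᵀ.map (algebraMap ℝ ℂ) * A = 0 := by
    ext l j
    rw [Matrix.mul_apply]
    simpa [Matrix.map_apply, Matrix.transpose_apply] using hBA l j
  have key : ∀ S : Matrix (Fin d) (Fin d) ℝ, Bᵀ * (B * S * Bᵀ) * B = S := by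
    intro S
    rw [← Matrix.mul_assoc Bᵀ (B * S) Bᵀ, ← Matrix.mul_assoc Bᵀ B S,
      Matrix.mul_assoc (Bᵀ * B * S) Bᵀ B, hBtB, Matrix.one_mul, Matrix.mul_one]
  have hmem : ∀ f : PLT d → ℝ,
      (B * soMk d f * Bᵀ, (0 : Matrix (Fin n) (Fin n) ℂ)) ∈ stabMod A := by
    intro f
    refine ⟨?_, by simp, ?_⟩
    · show (B * soMk d f * Bᵀ)ᵀ = -(B * soMk d f * Bᵀ)
      calc (B * soMk d f * Bᵀ)ᵀ = Bᵀᵀ * ((soMk d f)ᵀ * Bᵀ) := by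
            rw [Matrix.transpose_mul, Matrix.transpose_mul]
        _ = -(B * soMk d f * Bᵀ) := by
            rw [Matrix.transpose_transpose, soMk_transpose, Matrix.neg_mul, Matrix.mul_neg,
              Matrix.mul_assoc]
    · show (B * soMk d f * Bᵀ).map (algebraMap ℝ ℂ) * A = A * 0
      rw [Matrix.mul_zero, Matrix.map_mul, Matrix.map_mul, Matrix.mul_assoc, hBmapA,
        Matrix.mul_zero]
  set φ : (PLT d → ℝ) →ₗ[ℝ] ↥(stabMod A) :=
    { toFun := fun f => ⟨(B * soMk d f * Bᵀ, 0), hmem f⟩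
      map_add' := fun f g => by
        apply Subtype.ext
        simp [map_add, Matrix.add_mul, Matrix.mul_add, Prod.ext_iff]
      map_smul' := fun c f => by
        apply Subtype.ext
        simp [_root_.map_smul, Matrix.smul_mul, Matrix.mul_smul, Prod.ext_iff] } with hφ
  have hinj : Function.Injective φ := by
    intro f f' h
    apply soMk_inj
    have h1 : B * soMk d f * Bᵀ = B * soMk d f' * Bᵀ :=
      congrArg Prod.fst (congrArg Subtype.val h)
    have := congrArg (fun M => Bᵀ * M * B) h1
    simpa [key] using this
  have hle := LinearMap.finrank_le_finrank_of_injective hinj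
  rw [Module.finrank_fintype_fun_eq_card, card_PLT] at hle
  calc (m - 2 * n) * (m - 2 * n - 1) / 2 = (m - 2 * n).choose 2 := (Nat.choose_two_right _).symm
    _ ≤ d.choose 2 := Nat.choose_le_choose 2 hdm
    _ = d * (d - 1) / 2 := Nat.choose_two_right d
    _ ≤ _ := hle


variable {m n : ℕ}

/-- the 𝔲 lower bound -/
lemma lower_u (A : Matrix (Fin m) (Fin n) ℂ) :
    (n - m) ^ 2 ≤ Module.finrank ℝ ↥(stabMod A) := by
  classical
  set L : EuclideanSpace ℂ (Fin n) →ₗ[ℂ] (Fin m → ℂ) :=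
    A.mulVecLin.comp (WithLp.linearEquiv 2 ℂ (Fin n → ℂ)).toLinearMap with hL
  set K := LinearMap.ker L with hK
  set e := Module.finrank ℂ K with he
  have hdm : n - m ≤ e := by
    have h1 := LinearMap.finrank_range_add_finrank_ker L
    rw [finrank_euclideanSpace_fin, ← hK] at h1
    have h2 : Module.finrank ℂ (LinearMap.range L) ≤ m :=
      (Submodule.finrank_le _).trans_eq (by simp [Module.finrank_fintype_fun_eq_card])
    omega
  set b := stdOrthonormalBasis ℂ (K : Submodule ℂ (EuclideanSpace ℂ (Fin n))) with hb
  set B : Matrix (Fin n) (Fin e) ℂ := Matrix.of fun i l => ((b l : EuclideanSpace ℂ (Fin n)) i)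
    with hB
  have hBHB : Bᴴ * B = 1 := by
    ext k l
    rw [Matrix.mul_apply]
    have horth := b.orthonormal
    rw [orthonormal_iff_ite] at horth
    have h2 : (inner ℂ ((b k : EuclideanSpace ℂ (Fin n))) ((b l : EuclideanSpace ℂ (Fin n))) : ℂ)
        = if k = l then 1 else 0 := by
      rw [← Submodule.coe_inner]; exact horth k l
    rw [PiLp.inner_apply] at h2
    simp only [RCLike.inner_apply] at h2
    rw [Matrix.one_apply]
    simp only [hB, Matrix.conjTranspose_apply, Matrix.of_apply]
    convert h2 using 2 with x
    rw [mul_comm]; rfl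
  have hAB : A * B = 0 := by
    ext i l
    rw [Matrix.mul_apply]
    have hker := LinearMap.mem_ker.mp (b l).2
    have h0 : (∑ j, A i j * B j l) = L (b l) i := rfl
    rw [Matrix.zero_apply, h0, hker]
    rfl
  have key : ∀ S : Matrix (Fin e) (Fin e) ℂ, Bᴴ * (B * S * Bᴴ) * B = S := by
    intro S
    rw [← Matrix.mul_assoc Bᴴ (B * S) Bᴴ, ← Matrix.mul_assoc Bᴴ B S,
      Matrix.mul_assoc (Bᴴ * B * S) Bᴴ B, hBHB, Matrix.one_mul, Matrix.mul_one]
  have hmem : ∀ f : Fin e × Fin e → ℝ,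
      ((0 : Matrix (Fin m) (Fin m) ℝ), B * uMk e f * Bᴴ) ∈ stabMod A := by
    intro f
    refine ⟨by simp, ?_, ?_⟩
    · show (B * uMk e f * Bᴴ)ᴴ = -(B * uMk e f * Bᴴ)
      calc (B * uMk e f * Bᴴ)ᴴ = Bᴴᴴ * ((uMk e f)ᴴ * Bᴴ) := by
            rw [Matrix.conjTranspose_mul, Matrix.conjTranspose_mul]
        _ = -(B * uMk e f * Bᴴ) := by
            rw [Matrix.conjTranspose_conjTranspose, uMk_conjTranspose, Matrix.neg_mul,
              Matrix.mul_neg, Matrix.mul_assoc]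
    · show (0 : Matrix (Fin m) (Fin m) ℝ).map (algebraMap ℝ ℂ) * A = A * (B * uMk e f * Bᴴ)
      rw [← Matrix.mul_assoc A (B * uMk e f) Bᴴ, ← Matrix.mul_assoc A B (uMk e f),
        hAB, Matrix.zero_mul, Matrix.zero_mul, Matrix.map_zero _ (map_zero _), Matrix.zero_mul]
  set φ : (Fin e × Fin e → ℝ) →ₗ[ℝ] ↥(stabMod A) :=
    { toFun := fun f => ⟨(0, B * uMk e f * Bᴴ), hmem f⟩
      map_add' := fun f g => by
        apply Subtype.ext
        simp [map_add, Matrix.add_mul, Matrix.mul_add, Prod.ext_iff]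
      map_smul' := fun c f => by
        apply Subtype.ext
        simp [_root_.map_smul, Matrix.smul_mul, Matrix.mul_smul, Prod.ext_iff] } with hphi
  have hinj : Function.Injective φ := by
    intro f f' h
    apply uMk_inj
    have h1 : B * uMk e f * Bᴴ = B * uMk e f' * Bᴴ :=
      congrArg Prod.snd (congrArg Subtype.val h)
    have := congrArg (fun M => Bᴴ * M * B) h1
    simpa [key] using this
  have hle := LinearMap.finrank_le_finrank_of_injective hinj
  rw [Module.finrank_fintype_fun_eq_card, Fintype.card_prod, Fintype.card_fin] at hle
  calc (n - m) ^ 2 ≤ e ^ 2 := Nat.pow_le_pow_left hdm 2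
    _ = e * e := sq e
    _ ≤ _ := hle



noncomputable def sg (j : ℕ) : ℝ := ((2 * j + 2 : ℕ) : ℝ)
noncomputable def tu (j : ℕ) : ℝ := ((2 * j + 1 : ℕ) : ℝ)

lemma sg_pos (j : ℕ) : 0 < sg j := by unfold sg; positivity
lemma tu_pos (j : ℕ) : 0 < tu j := by unfold tu; positivity
lemma sg_ne (j : ℕ) : sg j ≠ 0 := (sg_pos j).ne'
lemma tu_ne (j : ℕ) : tu j ≠ 0 := (tu_pos j).ne'

lemma cast_sq_ne {p q : ℕ} (h : p ≠ q) : ((p : ℝ)) ^ 2 ≠ ((q : ℝ)) ^ 2 := by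
  rw [← Nat.cast_pow, ← Nat.cast_pow, Ne, Nat.cast_inj]
  exact fun hc => h (Nat.pow_left_injective (by norm_num) hc)

lemma sg_sq_ne {a b : ℕ} (h : a ≠ b) : sg a ^ 2 ≠ sg b ^ 2 :=
  cast_sq_ne (by omega)

lemma sg_tu_sq_ne (a s : ℕ) : sg a ^ 2 ≠ tu s ^ 2 :=
  cast_sq_ne (by omega)

/-- sum over `Fin p` of a function supported where the index value equals `c` -/
lemma sum_ite_val {M : Type*} [AddCommMonoid M] {p : ℕ} (c : ℕ) (g : Fin p → M) :
    ∑ k : Fin p, (if (k : ℕ) = c then g k else 0)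
      = if h : c < p then g ⟨c, h⟩ else 0 := by
  split_ifs with h
  · rw [Finset.sum_eq_single ⟨c, h⟩]
    · simp
    · intro k _ hk
      rw [if_neg]
      exact fun hc => hk (Fin.ext hc)
    · simp
  · apply Finset.sum_eq_zero
    intro k _
    rw [if_neg]
    exact fun hc => h (hc ▸ k.2)

lemma sum_ite_val' {M : Type*} [AddCommMonoid M] {p : ℕ} (c n' : ℕ) (g : Fin p → M) :
    ∑ k : Fin p, (if c = n' + (k : ℕ) then g k else 0)
      = if h : n' ≤ c ∧ c - n' < p then g ⟨c - n', h.2⟩ else 0 := by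
  split_ifs with h
  · rw [Finset.sum_eq_single ⟨c - n', h.2⟩]
    · rw [if_pos (show c = n' + ((⟨c - n', h.2⟩ : Fin p) : ℕ) by
        show c = n' + (c - n'); omega)]
    · intro k _ hk
      rw [if_neg]
      intro hc
      apply hk
      apply Fin.ext
      show (k : ℕ) = c - n'
      omega
    · simp
  · apply Finset.sum_eq_zero
    intro k _
    rw [if_neg]
    intro hc
    exact h (by constructor <;> omega)

noncomputable def A1 (m n : ℕ) : Matrix (Fin m) (Fin n) ℂ :=
  Matrix.of fun i j =>
    if (i : ℕ) = (j : ℕ) then (sg j : ℂ)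
    else if (i : ℕ) = n + (j : ℕ) then (tu j : ℝ) * Complex.I else 0

section master
variable {m n : ℕ}
variable {X : Matrix (Fin m) (Fin m) ℝ} {Y : Matrix (Fin n) (Fin n) ℂ}

lemma master1 (hn : 1 ≤ n) (hnm : n ≤ m)
    (h3 : X.map (algebraMap ℝ ℂ) * A1 m n = A1 m n * Y) (i : Fin m) (j : Fin n) :
    ((sg j * X i (Fin.castLE hnm j) : ℝ) : ℂ)
      + (if h : n + (j : ℕ) < m then ((tu j * X i ⟨n + j, h⟩ : ℝ) : ℂ) * Complex.I else 0)
    = (if h : (i : ℕ) < n then (sg i : ℂ) * Y ⟨i, h⟩ j else 0)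
      + (if h : n ≤ (i : ℕ) ∧ (i : ℕ) - n < n
          then (tu ((i : ℕ) - n) : ℂ) * Complex.I * Y ⟨(i : ℕ) - n, h.2⟩ j else 0) := by
  have hh := congrFun (congrFun h3 i) j
  rw [Matrix.mul_apply, Matrix.mul_apply] at hh
  have hL : ∑ k, X.map (algebraMap ℝ ℂ) i k * A1 m n k j
      = ∑ k : Fin m, ((if (k : ℕ) = (j : ℕ) then ((sg j * X i k : ℝ) : ℂ) else 0)
        + (if (k : ℕ) = n + (j : ℕ) then ((tu j * X i k : ℝ) : ℂ) * Complex.I else 0)) := by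
    refine Finset.sum_congr rfl fun k _ => ?_
    simp only [Matrix.map_apply, A1, Matrix.of_apply, Complex.coe_algebraMap]
    split_ifs <;> push_cast
    all_goals try ring
    all_goals (exfalso; omega)
  have hR : ∑ k, A1 m n i k * Y k j
      = ∑ k : Fin n, ((if (k : ℕ) = (i : ℕ) then (sg k : ℂ) * Y k j else 0)
        + (if (i : ℕ) = n + (k : ℕ) then ((tu k : ℝ) : ℂ) * Complex.I * Y k j else 0)) := by
    refine Finset.sum_congr rfl fun k _ => ?_
    simp only [A1, Matrix.of_apply]
    split_ifs
    all_goals try ring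
    all_goals (exfalso; omega)
  rw [hL, hR, Finset.sum_add_distrib, Finset.sum_add_distrib, sum_ite_val, sum_ite_val,
    sum_ite_val, sum_ite_val'] at hh
  rw [dif_pos (lt_of_lt_of_le j.2 hnm)] at hh
  exact hh
end master

section master2
variable {m n : ℕ} {X : Matrix (Fin m) (Fin m) ℝ} {Y : Matrix (Fin n) (Fin n) ℂ}

lemma master1Re (hn : 1 ≤ n) (hnm : n ≤ m)
    (h3 : X.map (algebraMap ℝ ℂ) * A1 m n = A1 m n * Y) (i : Fin m) (j : Fin n) :
    sg j * X i (Fin.castLE hnm j)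
    = (if h : (i : ℕ) < n then sg i * (Y ⟨i, h⟩ j).re else 0)
      + (if h : n ≤ (i : ℕ) ∧ (i : ℕ) - n < n
          then -(tu ((i : ℕ) - n) * (Y ⟨(i : ℕ) - n, h.2⟩ j).im) else 0) := by
  have h := congrArg Complex.re (master1 hn hnm h3 i j)
  simpa [apply_dite Complex.re, Complex.add_re, Complex.mul_re] using h

lemma master1Im (hn : 1 ≤ n) (hnm : n ≤ m)
    (h3 : X.map (algebraMap ℝ ℂ) * A1 m n = A1 m n * Y) (i : Fin m) (j : Fin n) :
    (if h : n + (j : ℕ) < m then tu j * X i ⟨n + j, h⟩ else 0)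
    = (if h : (i : ℕ) < n then sg i * (Y ⟨i, h⟩ j).im else 0)
      + (if h : n ≤ (i : ℕ) ∧ (i : ℕ) - n < n
          then tu ((i : ℕ) - n) * (Y ⟨(i : ℕ) - n, h.2⟩ j).re else 0) := by
  have h := congrArg Complex.im (master1 hn hnm h3 i j)
  simpa [apply_dite Complex.im, Complex.add_im, Complex.mul_im] using h

end master2
section elim
variable {m n : ℕ} {X : Matrix (Fin m) (Fin m) ℝ} {Y : Matrix (Fin n) (Fin n) ℂ}

lemma elim1 (hn : 1 ≤ n) (hnm : n ≤ m) (hX : Xᵀ = -X) (hY : Yᴴ = -Y)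
    (h3 : X.map (algebraMap ℝ ℂ) * A1 m n = A1 m n * Y) :
    Y = 0 ∧ ∀ i j : Fin m, (j : ℕ) < 2 * n → X i j = 0 := by
  have hXs : ∀ a b : Fin m, X b a = -X a b := fun a b => by
    simpa using congrFun (congrFun hX a) b
  have hXd : ∀ a : Fin m, X a a = 0 := fun a => by have := hXs a a; linarith
  have hYs : ∀ a b : Fin n, star (Y b a) = -(Y a b) := fun a b => by
    simpa using congrFun (congrFun hY a) b
  have hYre : ∀ a b : Fin n, (Y b a).re = -(Y a b).re := fun a b => by
    have := congrArg Complex.re (hYs a b)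
    simpa using this
  have hYim : ∀ a b : Fin n, (Y b a).im = (Y a b).im := fun a b => by
    have := congrArg Complex.im (hYs a b)
    simpa using this
  -- Step B
  have stepB : ∀ a b : Fin n,
      (Y a b).re = 0 ∧ X (Fin.castLE hnm a) (Fin.castLE hnm b) = 0 := by
    intro a b
    have ha := a.isLt
    have hb := b.isLt
    have E1 := master1Re hn hnm h3 (Fin.castLE hnm a) b
    simp only [Fin.coe_castLE] at E1
    rw [dif_pos a.isLt, dif_neg (show ¬(n ≤ (a : ℕ) ∧ (a : ℕ) - n < n) by omega)] at E1
    simp only [Fin.eta, add_zero] at E1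
    have E2 := master1Re hn hnm h3 (Fin.castLE hnm b) a
    simp only [Fin.coe_castLE] at E2
    rw [dif_pos b.isLt, dif_neg (show ¬(n ≤ (b : ℕ) ∧ (b : ℕ) - n < n) by omega)] at E2
    simp only [Fin.eta, add_zero] at E2
    rw [hXs (Fin.castLE hnm a) (Fin.castLE hnm b), hYre a b] at E2
    have hre : (Y a b).re = 0 := by
      by_cases hab : (a : ℕ) = (b : ℕ)
      · have hab' : a = b := Fin.ext hab
        subst hab'
        have := hYre a a
        linarith
      · have hfac : (sg (a : ℕ) ^ 2 - sg (b : ℕ) ^ 2) * (Y a b).re = 0 := by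
          linear_combination (-(sg (a : ℕ))) * E1 + (-(sg (b : ℕ))) * E2
        rcases mul_eq_zero.mp hfac with h | h
        · exact absurd (sub_eq_zero.mp h) (sg_sq_ne hab)
        · exact h
    refine ⟨hre, ?_⟩
    rw [hre, mul_zero] at E1
    exact (mul_eq_zero.mp E1).resolve_left (sg_ne _)
  -- Step C
  have stepC : ∀ a s : Fin n, (Y a s).im = 0
      ∧ ∀ hs : n + (s : ℕ) < m, X (Fin.castLE hnm a) ⟨n + s, hs⟩ = 0 := by
    intro a s
    have ha := a.isLt
    have hsn := s.isLt
    have F1 := master1Im hn hnm h3 (Fin.castLE hnm a) s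
    simp only [Fin.coe_castLE] at F1
    rw [dif_pos a.isLt, dif_neg (show ¬(n ≤ (a : ℕ) ∧ (a : ℕ) - n < n) by omega)] at F1
    simp only [Fin.eta, add_zero] at F1
    by_cases hs : n + (s : ℕ) < m
    · rw [dif_pos hs] at F1
      have F2 := master1Re hn hnm h3 ⟨n + s, hs⟩ a
      simp only [Fin.val_mk, Nat.add_sub_cancel_left, Fin.eta] at F2
      rw [dif_neg (show ¬(n + (s : ℕ) < n) by omega),
        dif_pos (show n ≤ n + (s : ℕ) ∧ (s : ℕ) < n from ⟨Nat.le_add_right n s, s.isLt⟩),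
        zero_add] at F2
      rw [hXs (Fin.castLE hnm a) ⟨n + s, hs⟩, hYim a s] at F2
      have him : (Y a s).im = 0 := by
        have hfac : (sg (a : ℕ) ^ 2 - tu (s : ℕ) ^ 2) * (Y a s).im = 0 := by
          linear_combination (-(sg (a : ℕ))) * F1 + (-(tu (s : ℕ))) * F2
        rcases mul_eq_zero.mp hfac with h | h
        · exact absurd (sub_eq_zero.mp h) (sg_tu_sq_ne _ _)
        · exact h
      refine ⟨him, fun hs' => ?_⟩
      rw [him, mul_zero] at F1
      exact (mul_eq_zero.mp F1).resolve_left (tu_ne _)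
    · rw [dif_neg hs] at F1
      exact ⟨(mul_eq_zero.mp F1.symm).resolve_left (sg_ne _),
        fun hs' => absurd hs' hs⟩
  -- Step D
  have stepD : ∀ (r s : Fin n) (hr : n + (r : ℕ) < m) (hs : n + (s : ℕ) < m),
      X ⟨n + r, hr⟩ ⟨n + s, hs⟩ = 0 := by
    intro r s hr hs
    have hrn := r.isLt
    have F := master1Im hn hnm h3 ⟨n + r, hr⟩ s
    simp only [Fin.val_mk, Nat.add_sub_cancel_left, Fin.eta] at F
    rw [dif_pos hs, dif_neg (show ¬(n + (r : ℕ) < n) by omega),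
      dif_pos (show n ≤ n + (r : ℕ) ∧ (r : ℕ) < n from ⟨Nat.le_add_right n r, r.isLt⟩),
      zero_add] at F
    rw [(stepB r s).1, mul_zero] at F
    exact (mul_eq_zero.mp F).resolve_left (tu_ne _)
  -- Step A
  have stepA : ∀ i j : Fin m, 2 * n ≤ (i : ℕ) → (j : ℕ) < 2 * n → X i j = 0 := by
    intro i j hi hj
    have hjm := j.isLt
    by_cases hjn : (j : ℕ) < n
    · have E := master1Re hn hnm h3 i ⟨j, hjn⟩
      rw [dif_neg (show ¬((i : ℕ) < n) by omega),
        dif_neg (show ¬(n ≤ (i : ℕ) ∧ (i : ℕ) - n < n) by omega), add_zero] at E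
      have h0 := (mul_eq_zero.mp E).resolve_left (sg_ne _)
      have e1 : Fin.castLE hnm (⟨(j : ℕ), hjn⟩ : Fin n) = j := Fin.ext rfl
      rwa [e1] at h0
    · have hjn2 : (j : ℕ) - n < n := by omega
      set s : Fin n := ⟨(j : ℕ) - n, hjn2⟩ with hs_def
      have hs : n + (s : ℕ) < m := by
        show n + ((j : ℕ) - n) < m
        omega
      have E := master1Im hn hnm h3 i s
      rw [dif_pos hs, dif_neg (show ¬((i : ℕ) < n) by omega),
        dif_neg (show ¬(n ≤ (i : ℕ) ∧ (i : ℕ) - n < n) by omega), add_zero] at E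
      have h0 := (mul_eq_zero.mp E).resolve_left (tu_ne _)
      have e1 : (⟨n + (s : ℕ), hs⟩ : Fin m) = j := Fin.ext (by show n + ((j:ℕ) - n) = (j:ℕ); omega)
      rwa [e1] at h0
  have hYzero : Y = 0 := by
    ext a b
    rw [Matrix.zero_apply]
    apply Complex.ext
    · exact (stepB a b).1
    · exact (stepC a b).1
  refine ⟨hYzero, ?_⟩
  intro i j hj
  have him := i.isLt
  have hjm := j.isLt
  by_cases hi : 2 * n ≤ (i : ℕ)
  · exact stepA i j hi hj
  · push_neg at hi
    by_cases hin : (i : ℕ) < n <;> by_cases hjn : (j : ℕ) < n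
    · have h0 := (stepB ⟨i, hin⟩ ⟨j, hjn⟩).2
      have e1 : Fin.castLE hnm (⟨(i : ℕ), hin⟩ : Fin n) = i := Fin.ext rfl
      have e2 : Fin.castLE hnm (⟨(j : ℕ), hjn⟩ : Fin n) = j := Fin.ext rfl
      rwa [e1, e2] at h0
    · have hjn2 : (j : ℕ) - n < n := by omega
      set s : Fin n := ⟨(j : ℕ) - n, hjn2⟩ with hs_def
      have hs : n + (s : ℕ) < m := by
        show n + ((j : ℕ) - n) < m
        omega
      have h0 := (stepC ⟨i, hin⟩ s).2 hs
      have e1 : Fin.castLE hnm (⟨(i : ℕ), hin⟩ : Fin n) = i := Fin.ext rfl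
      have e2 : (⟨n + (s : ℕ), hs⟩ : Fin m) = j :=
        Fin.ext (by show n + ((j:ℕ) - n) = (j:ℕ); omega)
      rwa [e1, e2] at h0
    · rw [hXs j i]
      have hin2 : (i : ℕ) - n < n := by omega
      set r : Fin n := ⟨(i : ℕ) - n, hin2⟩ with hr_def
      have hr : n + (r : ℕ) < m := by
        show n + ((i : ℕ) - n) < m
        omega
      have h0 := (stepC ⟨j, hjn⟩ r).2 hr
      have e1 : Fin.castLE hnm (⟨(j : ℕ), hjn⟩ : Fin n) = j := Fin.ext rfl
      have e2 : (⟨n + (r : ℕ), hr⟩ : Fin m) = i :=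
        Fin.ext (by show n + ((i:ℕ) - n) = (i:ℕ); omega)
      rw [e1, e2] at h0
      rw [h0, neg_zero]
    · have hin2 : (i : ℕ) - n < n := by omega
      have hjn2 : (j : ℕ) - n < n := by omega
      set r : Fin n := ⟨(i : ℕ) - n, hin2⟩ with hr_def
      set s : Fin n := ⟨(j : ℕ) - n, hjn2⟩ with hs_def
      have hr : n + (r : ℕ) < m := by
        show n + ((i : ℕ) - n) < m
        omega
      have hs : n + (s : ℕ) < m := by
        show n + ((j : ℕ) - n) < m
        omega
      have h0 := stepD r s hr hs
      have e1 : (⟨n + (r : ℕ), hr⟩ : Fin m) = i :=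
        Fin.ext (by show n + ((i:ℕ) - n) = (i:ℕ); omega)
      have e2 : (⟨n + (s : ℕ), hs⟩ : Fin m) = j :=
        Fin.ext (by show n + ((j:ℕ) - n) = (j:ℕ); omega)
      rwa [e1, e2] at h0

end elim


section upper1
variable {m n : ℕ}

lemma upper1 (hn : 1 ≤ n) (hnm : n ≤ m) :
    Module.finrank ℝ ↥(stabMod (A1 m n)) ≤ (m - 2 * n) * (m - 2 * n - 1) / 2 := by
  classical
  set d := m - 2 * n with hd
  set emb : Fin d → Fin m := fun k => ⟨2 * n + (k : ℕ), by have := k.isLt; omega⟩ with hemb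
  set ψ : ↥(stabMod (A1 m n)) →ₗ[ℝ] (PLT d → ℝ) :=
    { toFun := fun p => fun x => (p : Matrix (Fin m) (Fin m) ℝ × Matrix (Fin n) (Fin n) ℂ).1
        (emb x.1.1) (emb x.1.2)
      map_add' := fun p q => by
        funext x
        simp [Matrix.add_apply]
      map_smul' := fun c p => by
        funext x
        simp [Matrix.smul_apply] } with hψ
  have hinj : Function.Injective ψ := by
    rw [injective_iff_map_eq_zero]
    rintro ⟨⟨Xp, Yp⟩, hmem⟩ hp
    obtain ⟨h1, h2, h3⟩ := hmem
    dsimp only at h1 h2 h3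
    obtain ⟨hY0, hX2n⟩ := elim1 hn hnm h1 h2 h3
    have hXs : ∀ a b : Fin m, Xp b a = -Xp a b := fun a b => by
      simpa using congrFun (congrFun h1 a) b
    have hX0 : Xp = 0 := by
      apply skew_eq_zero h1
      intro i j hij
      by_cases hj2 : (j : ℕ) < 2 * n
      · exact hX2n i j hj2
      · by_cases hi2 : (i : ℕ) < 2 * n
        · rw [hXs j i, hX2n j i hi2, neg_zero]
        · have hi2' : 2 * n ≤ (i : ℕ) := by omega
          have hj2' : 2 * n ≤ (j : ℕ) := by omega
          have hjm := j.isLt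
          have him := i.isLt
          set k : Fin d := ⟨(i : ℕ) - 2 * n, by omega⟩ with hk
          set l : Fin d := ⟨(j : ℕ) - 2 * n, by omega⟩ with hl
          have hkl : k < l := by
            rw [Fin.lt_def]
            show (i : ℕ) - 2 * n < (j : ℕ) - 2 * n
            have : (i : ℕ) < (j : ℕ) := hij
            omega
          have := congrFun hp ⟨(k, l), hkl⟩
          have ek : emb k = i := Fin.ext (by show 2 * n + ((i : ℕ) - 2 * n) = (i : ℕ); omega)
          have el : emb l = j := Fin.ext (by show 2 * n + ((j : ℕ) - 2 * n) = (j : ℕ); omega)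
          rw [hψ] at this
          simp only [LinearMap.coe_mk, AddHom.coe_mk, Pi.zero_apply] at this
          rw [ek, el] at this
          exact this
    apply Subtype.ext
    show (Xp, Yp) = 0
    rw [Prod.ext_iff]
    exact ⟨hX0, hY0⟩
  have hle := LinearMap.finrank_le_finrank_of_injective hinj
  rwa [Module.finrank_fintype_fun_eq_card, card_PLT] at hle

end upper1

section caseA2
variable {m n : ℕ} {X : Matrix (Fin m) (Fin m) ℝ} {Y : Matrix (Fin n) (Fin n) ℂ}

noncomputable def A2 (m n : ℕ) : Matrix (Fin m) (Fin n) ℂ :=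
  Matrix.of fun i j => if (j : ℕ) = (i : ℕ) then (sg (i : ℕ) : ℂ) else 0

lemma master2 (hmn : m ≤ n)
    (h3 : X.map (algebraMap ℝ ℂ) * A2 m n = A2 m n * Y) (i : Fin m) (j : Fin n) :
    (if h : (j : ℕ) < m then ((sg j * X i ⟨j, h⟩ : ℝ) : ℂ) else 0)
      = (sg i : ℂ) * Y (Fin.castLE hmn i) j := by
  have hh := congrFun (congrFun h3 i) j
  rw [Matrix.mul_apply, Matrix.mul_apply] at hh
  have hL : ∑ k, X.map (algebraMap ℝ ℂ) i k * A2 m n k j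
      = ∑ k : Fin m, (if (k : ℕ) = (j : ℕ) then ((sg j * X i k : ℝ) : ℂ) else 0) := by
    refine Finset.sum_congr rfl fun k _ => ?_
    simp only [Matrix.map_apply, A2, Matrix.of_apply, Complex.coe_algebraMap]
    split_ifs with hc1 hc2 hc3
    · rw [show (j : ℕ) = (k : ℕ) from hc1]
      push_cast
      ring
    · exact absurd hc1.symm hc2
    · exact absurd hc3.symm hc1
    · ring
  have hR : ∑ k, A2 m n i k * Y k j
      = ∑ k : Fin n, (if (k : ℕ) = (i : ℕ) then (sg (i : ℕ) : ℂ) * Y k j else 0) := by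
    refine Finset.sum_congr rfl fun k _ => ?_
    simp only [A2, Matrix.of_apply]
    split_ifs <;> ring
  rw [hL, hR, sum_ite_val, sum_ite_val] at hh
  rw [dif_pos (lt_of_lt_of_le i.2 hmn)] at hh
  exact hh

lemma master2Re (hmn : m ≤ n)
    (h3 : X.map (algebraMap ℝ ℂ) * A2 m n = A2 m n * Y) (i : Fin m) (j : Fin n) :
    (if h : (j : ℕ) < m then sg j * X i ⟨j, h⟩ else 0)
      = sg i * (Y (Fin.castLE hmn i) j).re := by
  have h := congrArg Complex.re (master2 hmn h3 i j)
  simpa [apply_dite Complex.re, Complex.mul_re] using h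

lemma master2Im (hmn : m ≤ n)
    (h3 : X.map (algebraMap ℝ ℂ) * A2 m n = A2 m n * Y) (i : Fin m) (j : Fin n) :
    0 = sg i * (Y (Fin.castLE hmn i) j).im := by
  have h := congrArg Complex.im (master2 hmn h3 i j)
  simpa [apply_dite Complex.im, Complex.mul_im] using h

lemma elim2 (hmn : m ≤ n) (hX : Xᵀ = -X) (hY : Yᴴ = -Y)
    (h3 : X.map (algebraMap ℝ ℂ) * A2 m n = A2 m n * Y) :
    X = 0 ∧ ∀ a b : Fin n, ((a : ℕ) < m ∨ (b : ℕ) < m) → Y a b = 0 := by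
  have hXs : ∀ a b : Fin m, X b a = -X a b := fun a b => by
    simpa using congrFun (congrFun hX a) b
  have hXd : ∀ a : Fin m, X a a = 0 := fun a => by have := hXs a a; linarith
  have hYs : ∀ a b : Fin n, star (Y b a) = -(Y a b) := fun a b => by
    simpa using congrFun (congrFun hY a) b
  have hYre : ∀ a b : Fin n, (Y b a).re = -(Y a b).re := fun a b => by
    have := congrArg Complex.re (hYs a b)
    simpa using this
  have hYim0 : ∀ (i : Fin m) (j : Fin n), (Y (Fin.castLE hmn i) j).im = 0 := fun i j =>
    (mul_eq_zero.mp (master2Im hmn h3 i j).symm).resolve_left (sg_ne _)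
  -- the core real computation
  have core : ∀ i j : Fin m, X i j = 0 ∧ (Y (Fin.castLE hmn i) (Fin.castLE hmn j)).re = 0 := by
    intro i j
    have E1 := master2Re hmn h3 i (Fin.castLE hmn j)
    simp only [Fin.coe_castLE] at E1
    rw [dif_pos j.isLt] at E1
    rw [show (⟨(j : ℕ), j.isLt⟩ : Fin m) = j from Fin.ext rfl] at E1
    have E2 := master2Re hmn h3 j (Fin.castLE hmn i)
    simp only [Fin.coe_castLE] at E2
    rw [dif_pos i.isLt] at E2
    rw [show (⟨(i : ℕ), i.isLt⟩ : Fin m) = i from Fin.ext rfl] at E2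
    rw [hXs i j, hYre (Fin.castLE hmn i) (Fin.castLE hmn j)] at E2
    have hre : (Y (Fin.castLE hmn i) (Fin.castLE hmn j)).re = 0 := by
      by_cases hij : (i : ℕ) = (j : ℕ)
      · have : i = j := Fin.ext hij
        subst this
        have := hYre (Fin.castLE hmn i) (Fin.castLE hmn i)
        linarith
      · have hfac : (sg (i : ℕ) ^ 2 - sg (j : ℕ) ^ 2)
            * (Y (Fin.castLE hmn i) (Fin.castLE hmn j)).re = 0 := by
          linear_combination (-(sg (i : ℕ))) * E1 + (-(sg (j : ℕ))) * E2
        rcases mul_eq_zero.mp hfac with h | h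
        · exact absurd (sub_eq_zero.mp h) (sg_sq_ne hij)
        · exact h
    refine ⟨?_, hre⟩
    rw [hre, mul_zero] at E1
    exact (mul_eq_zero.mp E1).resolve_left (sg_ne _)
  have hX0 : X = 0 := by
    ext i j
    rw [Matrix.zero_apply]
    exact (core i j).1
  refine ⟨hX0, ?_⟩
  have hleft : ∀ a b : Fin n, (a : ℕ) < m → Y a b = 0 := by
    intro a b ha
    have ea : Fin.castLE hmn (⟨(a : ℕ), ha⟩ : Fin m) = a := Fin.ext rfl
    apply Complex.ext
    · by_cases hb : (b : ℕ) < m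
      · have eb : Fin.castLE hmn (⟨(b : ℕ), hb⟩ : Fin m) = b := Fin.ext rfl
        have := (core ⟨a, ha⟩ ⟨b, hb⟩).2
        rw [ea, eb] at this
        simpa using this
      · have E := master2Re hmn h3 ⟨a, ha⟩ b
        rw [dif_neg hb, ea] at E
        have := (mul_eq_zero.mp E.symm).resolve_left (sg_ne _)
        simpa using this
    · have := hYim0 ⟨a, ha⟩ b
      rw [ea] at this
      simpa using this
  intro a b hab
  rcases hab with ha | hb
  · exact hleft a b ha
  · have h0 := hleft b a hb
    have := hYs b a
    rw [h0] at this
    simpa using congrArg Neg.neg this.symm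

lemma upper2 (hmn : m ≤ n) :
    Module.finrank ℝ ↥(stabMod (A2 m n)) ≤ (n - m) ^ 2 := by
  classical
  set d := n - m with hd
  set emb : Fin d → Fin n := fun k => ⟨m + (k : ℕ), by have := k.isLt; omega⟩ with hemb
  set ψ : ↥(stabMod (A2 m n)) →ₗ[ℝ] (Fin d × Fin d → ℝ) :=
    { toFun := fun p => fun x =>
        if x.1 < x.2 then ((p : Matrix (Fin m) (Fin m) ℝ × Matrix (Fin n) (Fin n) ℂ).2
          (emb x.1) (emb x.2)).re
        else if x.2 < x.1 then ((p : Matrix (Fin m) (Fin m) ℝ × Matrix (Fin n) (Fin n) ℂ).2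
          (emb x.2) (emb x.1)).im
        else ((p : Matrix (Fin m) (Fin m) ℝ × Matrix (Fin n) (Fin n) ℂ).2
          (emb x.1) (emb x.1)).im
      map_add' := fun p q => by
        funext x
        by_cases h1 : x.1 < x.2 <;> by_cases h2 : x.2 < x.1 <;>
          simp [h1, h2, Matrix.add_apply]
      map_smul' := fun c p => by
        funext x
        by_cases h1 : x.1 < x.2 <;> by_cases h2 : x.2 < x.1 <;>
          simp [h1, h2, Matrix.smul_apply, Complex.real_smul] } with hψ
  have hinj : Function.Injective ψ := by
    rw [injective_iff_map_eq_zero]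
    rintro ⟨⟨Xp, Yp⟩, hmem⟩ hp
    obtain ⟨h1, h2, h3⟩ := hmem
    dsimp only at h1 h2 h3
    obtain ⟨hX0, hYout⟩ := elim2 hmn h1 h2 h3
    have hYre : ∀ a b : Fin n, (Yp b a).re = -(Yp a b).re := fun a b => by
      have := congrArg Complex.re (congrFun (congrFun h2 a) b)
      simpa using this
    have hpx : ∀ x : Fin d × Fin d, ψ ⟨(Xp, Yp), ⟨h1, h2, h3⟩⟩ x = 0 := fun x => by
      rw [hp]; rfl
    have hY0 : Yp = 0 := by
      apply skewHerm_eq_zero h2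
      intro a b hab
      by_cases ham : (a : ℕ) < m
      · exact hYout a b (Or.inl ham)
      · by_cases hbm : (b : ℕ) < m
        · exact hYout a b (Or.inr hbm)
        · have han := a.isLt
          have hbn := b.isLt
          set k : Fin d := ⟨(a : ℕ) - m, by omega⟩ with hk
          set l : Fin d := ⟨(b : ℕ) - m, by omega⟩ with hl
          have ek : emb k = a := Fin.ext (by show m + ((a : ℕ) - m) = (a : ℕ); omega)
          have el : emb l = b := Fin.ext (by show m + ((b : ℕ) - m) = (b : ℕ); omega)
          rcases lt_or_eq_of_le hab with hlt | heq
          · have hkl : k < l := by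
              rw [Fin.lt_def]
              show (a : ℕ) - m < (b : ℕ) - m
              have : (a : ℕ) < (b : ℕ) := hlt
              omega
            have hre := hpx (k, l)
            have him := hpx (l, k)
            rw [hψ] at hre him
            simp only [LinearMap.coe_mk, AddHom.coe_mk] at hre him
            try dsimp only at hre him
            rw [if_pos hkl] at hre
            rw [if_neg (asymm hkl), if_pos hkl] at him
            rw [ek, el] at hre him
            apply Complex.ext
            · simpa using hre
            · simpa using him
          · subst heq
            have him := hpx (k, k)
            rw [hψ] at him
            simp only [LinearMap.coe_mk, AddHom.coe_mk, lt_irrefl, if_false, ek] at him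
            apply Complex.ext
            · have := hYre a a
              simp only [Matrix.zero_apply, Complex.zero_re]
              linarith
            · simpa using him
    apply Subtype.ext
    show (Xp, Yp) = 0
    rw [Prod.ext_iff]
    exact ⟨hX0, hY0⟩
  have hle := LinearMap.finrank_le_finrank_of_injective hinj
  rw [Module.finrank_fintype_fun_eq_card, Fintype.card_prod, Fintype.card_fin] at hle
  calc Module.finrank ℝ ↥(stabMod (A2 m n)) ≤ d * d := hle
    _ = (n - m) ^ 2 := by rw [hd, sq]

end caseA2

end Stab3

theorem stmt3 (m n : ℕ) (hm : 1 ≤ m) (hn : 1 ≤ n) :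
    IsLeast {d : ℕ | ∃ A : Matrix (Fin m) (Fin n) ℂ,
        d = Module.finrank ℝ (Submodule.span ℝ (stabSet3 A))}
      (if 2 * n + 1 < m then (m - 2 * n) * (m - 2 * n - 1) / 2
       else if m < n then (n - m) ^ 2 else 0) := by
  constructor
  · by_cases hcase : m < n
    · refine ⟨Stab3.A2 m n, ?_⟩
      rw [Stab3.span_stabSet3]
      rw [if_neg (by omega), if_pos hcase]
      exact le_antisymm (Stab3.lower_u _) (Stab3.upper2 (le_of_lt hcase))
    · push_neg at hcase
      refine ⟨Stab3.A1 m n, ?_⟩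
      rw [Stab3.span_stabSet3]
      by_cases h2 : 2 * n + 1 < m
      · rw [if_pos h2]
        exact le_antisymm (Stab3.lower_so _) (Stab3.upper1 hn hcase)
      · rw [if_neg h2, if_neg (by omega)]
        have hb : (m - 2 * n) * (m - 2 * n - 1) / 2 = 0 := by
          have h1 : m - 2 * n - 1 = 0 := by omega
          rw [h1, mul_zero]
          rfl
        have hu := Stab3.upper1 hn hcase
        rw [hb] at hu
        omega
  · rintro d ⟨A, rfl⟩
    rw [Stab3.span_stabSet3]
    split_ifs with h1 h2
    · exact Stab3.lower_so A
    · exact Stab3.lower_u A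
    · exact Nat.zero_le _
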